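/- Let (U, ρ) be a metric space, γ > 0, c ≥ 1, G : U × U → ℝ≥0∞ with c⁻¹ρ(x,y)^{-γ} ≤ G(x,y) ≤ cρ(x,y)^{-γ}. Let ν be a finite measure with support in A, and suppose for some x₀ ∈ A, ε > 0, δ > 0 we have: Gν(y) := ∫G(y,z)dν(z) < ε for all y ∈ A with ρ(y,x₀) < 2δ, and Gν(x₀) < ε. Then for every x with ρ(x,x₀) < δ such that A contains a nearest point to x, we have Gν(x) ≤ (2^γ c² + 1)·ε. -/

import Mathlib

open MeasureTheory ENNReal

theorem stmt5 {U : Type*} [MetricSpace U] [MeasurableSpace U] (γ c : ℝ)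
    (hγ : 0 < γ) (hc : 1 ≤ c) (G : U → U → ℝ≥0∞)
    (hG : ∀ x y, (ENNReal.ofReal c)⁻¹ * (ENNReal.ofReal (dist x y)) ^ (-γ) ≤ G x y ∧
      G x y ≤ ENNReal.ofReal c * (ENNReal.ofReal (dist x y)) ^ (-γ))
    (ν : Measure U) [IsFiniteMeasure ν] (A : Set U) (hAm : MeasurableSet A)
    (hAν : ν Aᶜ = 0) (x₀ : U) (hx₀ : x₀ ∈ A) (ε δ : ℝ) (hε : 0 < ε) (hδ : 0 < δ)
    (hball : ∀ y ∈ A, dist y x₀ < 2 * δ → ∫⁻ z, G y z ∂ν < ENNReal.ofReal ε)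
    (hx₀int : ∫⁻ z, G x₀ z ∂ν < ENNReal.ofReal ε) :
    ∀ x, dist x x₀ < δ →
      (∃ yx ∈ A, ∀ y ∈ A, dist x yx ≤ dist x y) →
      ∫⁻ z, G x z ∂ν ≤ ENNReal.ofReal ((2 ^ γ * c ^ 2 + 1) * ε) := by
  intro x hxδ ⟨yx, hyxA, hyx⟩
  set cE : ℝ≥0∞ := ENNReal.ofReal c with hcE
  have hc0 : (0:ℝ) < c := lt_of_lt_of_le one_pos hc
  have hcE0 : cE ≠ 0 := by
    simp [hcE, ENNReal.ofReal_eq_zero, not_le, hc0]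
  have hcEt : cE ≠ ∞ := ENNReal.ofReal_ne_top
  -- yx is within 2δ of x₀
  have hyx0 : dist x yx ≤ dist x x₀ := hyx x₀ hx₀
  have hyxd : dist yx x₀ < 2 * δ := by
    have := dist_triangle yx x x₀
    rw [dist_comm yx x] at this
    linarith
  have hGyx : ∫⁻ z, G yx z ∂ν < ENNReal.ofReal ε := hball yx hyxA hyxd
  -- pointwise bound for z ∈ A
  set K : ℝ≥0∞ := (2:ℝ≥0∞) ^ γ * cE ^ 2 with hK
  have hpt : ∀ z ∈ A, G x z ≤ K * G yx z := by
    intro z hz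
    have hdz : dist yx z ≤ 2 * dist x z := by
      have h1 := dist_triangle yx x z
      have h2 : dist x yx ≤ dist x z := hyx z hz
      rw [dist_comm yx x] at h1
      linarith
    have hdzE : ENNReal.ofReal (dist yx z) ≤ 2 * ENNReal.ofReal (dist x z) := by
      rw [show (2:ℝ≥0∞) = ENNReal.ofReal 2 by norm_num, ← ENNReal.ofReal_mul (by norm_num)]
      exact ENNReal.ofReal_le_ofReal hdz
    -- negative power antitone
    have hrpow : (2 * ENNReal.ofReal (dist x z)) ^ (-γ) ≤
        (ENNReal.ofReal (dist yx z)) ^ (-γ) := by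
      rw [ENNReal.rpow_neg, ENNReal.rpow_neg]
      exact ENNReal.inv_le_inv.mpr (ENNReal.rpow_le_rpow hdzE hγ.le)
    have hmul : (2 * ENNReal.ofReal (dist x z)) ^ (-γ) =
        (2:ℝ≥0∞) ^ (-γ) * (ENNReal.ofReal (dist x z)) ^ (-γ) :=
      ENNReal.mul_rpow_of_ne_top ENNReal.ofNat_ne_top ENNReal.ofReal_ne_top (-γ)
    have h2γ : (ENNReal.ofReal (dist x z)) ^ (-γ) ≤
        (2:ℝ≥0∞) ^ γ * (ENNReal.ofReal (dist yx z)) ^ (-γ) := by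
      calc (ENNReal.ofReal (dist x z)) ^ (-γ)
          = (2:ℝ≥0∞) ^ γ * ((2:ℝ≥0∞) ^ (-γ) * (ENNReal.ofReal (dist x z)) ^ (-γ)) := by
            rw [← mul_assoc, ← ENNReal.rpow_add γ (-γ) two_ne_zero ENNReal.ofNat_ne_top]
            simp
        _ ≤ (2:ℝ≥0∞) ^ γ * (ENNReal.ofReal (dist yx z)) ^ (-γ) := by
            gcongr
            rw [← hmul]; exact hrpow
    have hlow : (ENNReal.ofReal (dist yx z)) ^ (-γ) ≤ cE * G yx z := by
      have h := (hG yx z).1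
      calc (ENNReal.ofReal (dist yx z)) ^ (-γ)
          = cE * (cE⁻¹ * (ENNReal.ofReal (dist yx z)) ^ (-γ)) := by
            rw [← mul_assoc, ENNReal.mul_inv_cancel hcE0 hcEt, one_mul]
        _ ≤ cE * G yx z := by gcongr
    calc G x z ≤ cE * (ENNReal.ofReal (dist x z)) ^ (-γ) := (hG x z).2
      _ ≤ cE * ((2:ℝ≥0∞) ^ γ * (ENNReal.ofReal (dist yx z)) ^ (-γ)) := by gcongr
      _ ≤ cE * ((2:ℝ≥0∞) ^ γ * (cE * G yx z)) := by gcongr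
      _ = K * G yx z := by rw [hK]; ring
  have hae : ∀ᵐ z ∂ν, G x z ≤ K * G yx z := by
    have hmem : ∀ᵐ z ∂ν, z ∈ A := by
      rw [MeasureTheory.ae_iff]
      exact hAν
    filter_upwards [hmem] with z hz using hpt z hz
  have hKt : K ≠ ∞ := by
    apply ENNReal.mul_ne_top
    · exact ENNReal.rpow_ne_top_of_nonneg hγ.le ENNReal.ofNat_ne_top
    · exact ENNReal.pow_ne_top hcEt
  calc ∫⁻ z, G x z ∂ν ≤ ∫⁻ z, K * G yx z ∂ν := lintegral_mono_ae hae
    _ = K * ∫⁻ z, G yx z ∂ν := lintegral_const_mul' K _ hKt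
    _ ≤ K * ENNReal.ofReal ε := mul_le_mul_right hGyx.le K
    _ = ENNReal.ofReal ((2 ^ γ * c ^ 2) * ε) := by
        rw [ENNReal.ofReal_mul (by positivity), ENNReal.ofReal_mul (by positivity),
          ← ENNReal.ofReal_rpow_of_pos (by norm_num : (0:ℝ) < 2),
          ENNReal.ofReal_pow hc0.le, ENNReal.ofReal_ofNat, hK]
    _ ≤ ENNReal.ofReal ((2 ^ γ * c ^ 2 + 1) * ε) := by
        apply ENNReal.ofReal_le_ofReal
        nlinarith [Real.rpow_pos_of_pos (by norm_num : (0:ℝ) < 2) γ]
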